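/- Let Y be a nonnegative random variable with θ := E[Y] ∈ (0,∞). Suppose there exists a nonnegative random variable Z independent of Y such that E[f(Y + Z)] = E[f(Y) · Y/θ] for all bounded measurable f : R → R. Then Y is infinitely divisible; moreover its Lévy measure ρ satisfies ρ(dy) = θ 1{y > 0} y^{−1} L(Z)(dy) and its drift equals θ P(Z = 0). -/

import Mathlib

open MeasureTheory ProbabilityTheory Set
open scoped ENNReal

lemma aux_exp_antideriv (y α : ℝ) :
    ∫ s in (0:ℝ)..α, y * Real.exp (-(s * y)) = 1 - Real.exp (-(α * y)) := by
  have h : ∀ s : ℝ, HasDerivAt (fun s => -Real.exp (-(s * y))) (y * Real.exp (-(s * y))) s := by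
    intro s
    have h1 : HasDerivAt (fun s : ℝ => -(s * y)) (-y) s := by simpa [Pi.neg_def] using ((hasDerivAt_id s).mul_const y).neg
    have h2 := (Real.hasDerivAt_exp (-(s * y))).comp s h1
    have h3 := h2.neg
    simpa [mul_comm, Pi.neg_def, Function.comp_def] using h3
  rw [intervalIntegral.integral_eq_sub_of_hasDerivAt (fun s _ => h s)
    (by apply Continuous.intervalIntegrable; continuity)]
  norm_num; ring

lemma aux_exp_antideriv' {y : ℝ} (hy : y ≠ 0) (α : ℝ) :
    ∫ s in (0:ℝ)..α, Real.exp (-(s * y)) = (1 - Real.exp (-(α * y))) / y := by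
  have := aux_exp_antideriv y α
  rw [intervalIntegral.integral_const_mul] at this
  field_simp at this ⊢
  linarith [this]

lemma aux_laplace_cont {Ω : Type*} [MeasurableSpace Ω] (P : Measure Ω) [IsProbabilityMeasure P]
    (W : Ω → ℝ) (hWm : Measurable W) (hWpos : ∀ ω, 0 ≤ W ω) :
    Continuous fun s : ℝ => ∫ ω, Real.exp (-(max s 0 * W ω)) ∂P := by
  apply continuous_of_dominated (bound := fun _ => (1:ℝ))
  · intro s
    exact ((measurable_const.mul hWm).neg.exp).aestronglyMeasurable
  · intro s
    filter_upwards with ω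
    rw [Real.norm_eq_abs, abs_of_pos (Real.exp_pos _)]
    rw [Real.exp_le_one_iff]
    exact neg_nonpos.mpr (mul_nonneg (le_max_right _ _) (hWpos ω))
  · exact integrable_const 1
  · filter_upwards with ω
    fun_prop

lemma aux_swap {Ω : Type*} [MeasurableSpace Ω] (P : Measure Ω) [IsProbabilityMeasure P]
    (α : ℝ) (F : ℝ → Ω → ℝ) (hF : Measurable (Function.uncurry F))
    (B : Ω → ℝ) (hB : Integrable B P)
    (hbound : ∀ s ∈ Ioc (0:ℝ) α, ∀ ω, |F s ω| ≤ B ω) :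
    ∫ s in Ioc (0:ℝ) α, (∫ ω, F s ω ∂P) = ∫ ω, (∫ s in Ioc (0:ℝ) α, F s ω) ∂P := by
  have hFs : AEStronglyMeasurable (Function.uncurry F)
      ((volume.restrict (Ioc (0:ℝ) α)).prod P) := hF.aestronglyMeasurable
  have hslice : ∀ s ∈ Ioc (0:ℝ) α, Integrable (fun ω => F s ω) P := by
    intro s hs
    refine hB.mono' ?_ (Filter.Eventually.of_forall fun ω => ?_)
    · exact (hF.comp (measurable_prodMk_left (α := ℝ))).aestronglyMeasurable
    · simpa using hbound s hs ω
  have hint : Integrable (Function.uncurry F) ((volume.restrict (Ioc (0:ℝ) α)).prod P) := by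
    rw [integrable_prod_iff hFs]
    constructor
    · filter_upwards [ae_restrict_mem measurableSet_Ioc] with s hs
      exact hslice s hs
    · refine (integrable_const (∫ ω, |B ω| ∂P)).mono' ?_ ?_
      · exact (hF.stronglyMeasurable.norm.integral_prod_right').aestronglyMeasurable
      · filter_upwards [ae_restrict_mem measurableSet_Ioc] with s hs
        rw [Real.norm_eq_abs, abs_of_nonneg (integral_nonneg fun ω => norm_nonneg _)]
        refine integral_mono ((hslice s hs).norm) hB.abs fun ω => ?_
        simpa [Real.norm_eq_abs] using (hbound s hs ω).trans (le_abs_self _)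
  exact integral_integral_swap hint


set_option maxHeartbeats 1000000 in
/-- If `Y ≥ 0` with `θ = E[Y] ∈ (0,∞)` admits a nonnegative `Z` independent of `Y` with
`E[f(Y + Z)] = E[f(Y) Y/θ]` for all bounded measurable `f`, then `Y` is infinitely
divisible with drift `θ P(Z = 0)` and Lévy measure `θ 1{y>0} y⁻¹ L(Z)(dy)`; i.e. its
Laplace transform is
`E e^{−αY} = exp(−α θ P(Z=0) − θ ∫_{(0,∞)} (1 − e^{−αy}) y⁻¹ L(Z)(dy))`. -/
theorem infinitely_divisible_of_size_biased_identity {Ω : Type*} [MeasurableSpace Ω]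
    (P : Measure Ω) [IsProbabilityMeasure P]
    (Y Z : Ω → ℝ) (hYm : Measurable Y) (hZm : Measurable Z)
    (hYpos : ∀ ω, 0 ≤ Y ω) (hZpos : ∀ ω, 0 ≤ Z ω)
    (hYint : Integrable Y P)
    (θ : ℝ) (hθpos : 0 < θ) (hEY : ∫ ω, Y ω ∂P = θ)
    (hindep : IndepFun Y Z P)
    (hiso : ∀ f : ℝ → ℝ, Measurable f → (∃ C, ∀ x, |f x| ≤ C) →
      ∫ ω, f (Y ω + Z ω) ∂P = ∫ ω, f (Y ω) * (Y ω / θ) ∂P) :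
    ∀ α : ℝ, 0 ≤ α →
      ∫ ω, Real.exp (-(α * Y ω)) ∂P =
        Real.exp (-(α * θ * (P {ω | Z ω = 0}).toReal) -
          θ * ∫ y in Set.Ioi (0 : ℝ), (1 - Real.exp (-(α * y))) / y ∂(P.map Z)) := by
  intro α hα
  set pY : ℝ → ℝ := fun s => ∫ ω, Real.exp (-(max s 0 * Y ω)) ∂P with hpYdef
  set pZ : ℝ → ℝ := fun s => ∫ ω, Real.exp (-(max s 0 * Z ω)) ∂P with hpZdef
  have hpYc : Continuous pY := aux_laplace_cont P Y hYm hYpos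
  have hpZc : Continuous pZ := aux_laplace_cont P Z hZm hZpos
  -- key size-bias identity
  have key : ∀ s : ℝ, θ * (pY s * pZ s) = ∫ ω, Y ω * Real.exp (-(max s 0 * Y ω)) ∂P := by
    intro s
    set t := max s 0 with ht
    have htpos : 0 ≤ t := le_max_right _ _
    have hf : Measurable fun x : ℝ => Real.exp (-(t * max x 0)) := by fun_prop
    have hbd : ∃ C, ∀ x, |Real.exp (-(t * max x 0))| ≤ C := ⟨1, fun x => by
      rw [abs_of_pos (Real.exp_pos _), Real.exp_le_one_iff]
      exact neg_nonpos.mpr (mul_nonneg htpos (le_max_right _ _))⟩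
    have h := hiso _ hf hbd
    have hgm : Measurable fun x : ℝ => Real.exp (-(t * x)) := by fun_prop
    have hL : (∫ ω, Real.exp (-(t * max (Y ω + Z ω) 0)) ∂P) =
        (∫ ω, Real.exp (-(t * Y ω)) ∂P) * (∫ ω, Real.exp (-(t * Z ω)) ∂P) := by
      have e1 : ∀ ω, Real.exp (-(t * max (Y ω + Z ω) 0)) =
          Real.exp (-(t * Y ω)) * Real.exp (-(t * Z ω)) := fun ω => by
        rw [max_eq_left (add_nonneg (hYpos ω) (hZpos ω)), ← Real.exp_add]
        ring_nf
      calc (∫ ω, Real.exp (-(t * max (Y ω + Z ω) 0)) ∂P)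
          = ∫ ω, ((fun x => Real.exp (-(t * x))) ∘ Y) ω *
              ((fun x => Real.exp (-(t * x))) ∘ Z) ω ∂P :=
            integral_congr_ae (Filter.Eventually.of_forall e1)
        _ = (∫ ω, Real.exp (-(t * Y ω)) ∂P) * (∫ ω, Real.exp (-(t * Z ω)) ∂P) :=
            IndepFun.integral_fun_mul_eq_mul_integral (hindep.comp hgm hgm)
              (hgm.comp hYm).aestronglyMeasurable (hgm.comp hZm).aestronglyMeasurable
    have e2 : ∀ ω, Real.exp (-(t * max (Y ω) 0)) * (Y ω / θ)
        = (Y ω * Real.exp (-(t * Y ω))) / θ := fun ω => by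
      rw [max_eq_left (hYpos ω)]; ring
    rw [hL] at h
    rw [integral_congr_ae (Filter.Eventually.of_forall e2), integral_div] at h
    rw [h]
    field_simp
    simp only [mul_comm]
  -- Fubini for Y
  have hexpYint : ∀ b : ℝ, 0 ≤ b → Integrable (fun ω => Real.exp (-(b * Y ω))) P := by
    intro b hb
    refine (integrable_const (1:ℝ)).mono' (Measurable.aestronglyMeasurable (by fun_prop)) ?_
    filter_upwards with ω
    rw [Real.norm_eq_abs, abs_of_pos (Real.exp_pos _), Real.exp_le_one_iff]
    exact neg_nonpos.mpr (mul_nonneg hb (hYpos ω))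
  have fubC : ∀ b : ℝ, 0 ≤ b →
      (∫ s in (0:ℝ)..b, ∫ ω, Y ω * Real.exp (-(max s 0 * Y ω)) ∂P) = 1 - pY b := by
    intro b hb
    have hpYb : pY b = ∫ ω, Real.exp (-(b * Y ω)) ∂P := by
      simp only [hpYdef, max_eq_left hb]
    rw [intervalIntegral.integral_of_le hb]
    have hcong : EqOn (fun s => ∫ ω, Y ω * Real.exp (-(max s 0 * Y ω)) ∂P)
        (fun s => ∫ ω, Y ω * Real.exp (-(s * Y ω)) ∂P) (Ioc (0:ℝ) b) := by
      intro s hs; simp only [max_eq_left hs.1.le]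
    rw [setIntegral_congr_fun measurableSet_Ioc hcong]
    rw [aux_swap P b (fun s ω => Y ω * Real.exp (-(s * Y ω))) (by fun_prop) Y hYint ?_]
    · have hpt : ∀ ω, (∫ s in Ioc (0:ℝ) b, Y ω * Real.exp (-(s * Y ω)))
          = 1 - Real.exp (-(b * Y ω)) := by
        intro ω
        rw [← intervalIntegral.integral_of_le hb]
        exact aux_exp_antideriv (Y ω) b
      rw [integral_congr_ae (Filter.Eventually.of_forall hpt),
        integral_sub (integrable_const 1) (hexpYint b hb), integral_const, probReal_univ,
        hpYb]
      simp
    · intro s hs ω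
      rw [abs_mul, abs_of_nonneg (hYpos ω), abs_of_pos (Real.exp_pos _)]
      calc Y ω * Real.exp (-(s * Y ω)) ≤ Y ω * 1 :=
            mul_le_mul_of_nonneg_left (by
              rw [Real.exp_le_one_iff]
              exact neg_nonpos.mpr (mul_nonneg hs.1.le (hYpos ω))) (hYpos ω)
        _ = Y ω := mul_one _
  -- Fubini for Z : value of H α
  set p : ℝ := (P {ω | Z ω = 0}).toReal with hpdef
  set I : ℝ := ∫ y in Set.Ioi (0 : ℝ), (1 - Real.exp (-(α * y))) / y ∂(P.map Z) with hIdef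
  have hZset : MeasurableSet {ω | Z ω = 0} := hZm (measurableSet_singleton 0)
  have hgZbound : ∀ ω, Z ω ≠ 0 → |(1 - Real.exp (-(α * Z ω))) / Z ω| ≤ α := by
    intro ω hz
    have hzpos : 0 < Z ω := lt_of_le_of_ne (hZpos ω) (Ne.symm hz)
    rw [abs_div, abs_of_pos hzpos, div_le_iff₀ hzpos]
    have h1 : Real.exp (-(α * Z ω)) ≤ 1 := by
      rw [Real.exp_le_one_iff]; exact neg_nonpos.mpr (mul_nonneg hα (hZpos ω))
    have h2 : 1 - α * Z ω ≤ Real.exp (-(α * Z ω)) := by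
      have := Real.add_one_le_exp (-(α * Z ω)); linarith
    rw [abs_of_nonneg (by linarith)]
    linarith
  have hgZint : Integrable (fun ω => if Z ω = 0 then α else (1 - Real.exp (-(α * Z ω))) / Z ω) P := by
    refine (integrable_const α).mono' ?_ ?_
    · apply Measurable.aestronglyMeasurable
      apply Measurable.ite hZset measurable_const
      fun_prop
    · filter_upwards with ω
      by_cases hz : Z ω = 0
      · simp [hz, Real.norm_eq_abs, abs_of_nonneg hα]
      · simp only [hz, if_false, Real.norm_eq_abs]
        exact hgZbound ω hz
  have fubD : (∫ s in (0:ℝ)..α, pZ s) = α * p + I := by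
    rw [intervalIntegral.integral_of_le hα]
    have hcong : EqOn (fun s => pZ s) (fun s => ∫ ω, Real.exp (-(s * Z ω)) ∂P) (Ioc (0:ℝ) α) := by
      intro s hs; simp only [hpZdef, max_eq_left hs.1.le]
    rw [setIntegral_congr_fun measurableSet_Ioc hcong]
    rw [aux_swap P α (fun s ω => Real.exp (-(s * Z ω))) (by fun_prop) (fun _ => 1)
      (integrable_const 1) ?_]
    · have hpt : ∀ ω, (∫ s in Ioc (0:ℝ) α, Real.exp (-(s * Z ω)))
          = if Z ω = 0 then α else (1 - Real.exp (-(α * Z ω))) / Z ω := by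
        intro ω
        rw [← intervalIntegral.integral_of_le hα]
        by_cases hz : Z ω = 0
        · simp [hz]
        · rw [if_neg hz]
          exact aux_exp_antideriv' hz α
      rw [integral_congr_ae (Filter.Eventually.of_forall hpt)]
      rw [← integral_add_compl hZset hgZint]
      have h1 : (∫ ω in {ω | Z ω = 0},
          (if Z ω = 0 then α else (1 - Real.exp (-(α * Z ω))) / Z ω) ∂P) = α * p := by
        rw [setIntegral_congr_fun hZset (g := fun _ => α) (fun ω hω => by simp [hω.out])]
        rw [setIntegral_const, smul_eq_mul]
        rw [measureReal_def, hpdef]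
        ring
      have hcompl : {ω | Z ω = 0}ᶜ = Z ⁻¹' (Set.Ioi 0) := by
        ext ω
        simp only [mem_compl_iff, mem_setOf_eq, mem_preimage, mem_Ioi]
        constructor
        · intro h; exact lt_of_le_of_ne (hZpos ω) (Ne.symm h)
        · intro h; exact ne_of_gt h
      have h2 : (∫ ω in {ω | Z ω = 0}ᶜ,
          (if Z ω = 0 then α else (1 - Real.exp (-(α * Z ω))) / Z ω) ∂P) = I := by
        rw [setIntegral_congr_fun hZset.compl
          (g := fun ω => (1 - Real.exp (-(α * Z ω))) / Z ω)
          (fun ω hω => by rw [if_neg (by simpa using hω)])]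
        rw [hIdef, setIntegral_map measurableSet_Ioi ?_ hZm.aemeasurable, hcompl]
        exact (Measurable.aestronglyMeasurable (by fun_prop))
      rw [h1, h2]
    · intro s hs ω
      rw [abs_of_pos (Real.exp_pos _), Real.exp_le_one_iff]
      exact neg_nonpos.mpr (mul_nonneg hs.1.le (hZpos ω))
  -- ODE argument
  set G : ℝ → ℝ := fun a => ∫ s in (0:ℝ)..a, pY s * pZ s with hGdef
  set H : ℝ → ℝ := fun a => ∫ s in (0:ℝ)..a, pZ s with hHdef
  have hGder : ∀ a : ℝ, HasDerivAt G (pY a * pZ a) a := fun a =>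
    ((hpYc.mul hpZc).integral_hasStrictDerivAt 0 a).hasDerivAt
  have hHder : ∀ a : ℝ, HasDerivAt H (pZ a) a := fun a =>
    (hpZc.integral_hasStrictDerivAt 0 a).hasDerivAt
  have hGeq : ∀ b : ℝ, 0 ≤ b → θ * G b = 1 - pY b := by
    intro b hb
    rw [hGdef]
    rw [← intervalIntegral.integral_const_mul]
    rw [← fubC b hb]
    exact intervalIntegral.integral_congr fun s _ => key s
  set u : ℝ → ℝ := fun a => (1 - θ * G a) * Real.exp (θ * H a) with hudef
  have huder : ∀ a : ℝ, 0 ≤ a → HasDerivAt u 0 a := by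
    intro a ha
    have h1 : HasDerivAt (fun a => 1 - θ * G a) (-(θ * (pY a * pZ a))) a :=
      ((hGder a).const_mul θ).const_sub 1
    have h2 : HasDerivAt (fun a => Real.exp (θ * H a)) (Real.exp (θ * H a) * (θ * pZ a)) a :=
      (Real.hasDerivAt_exp _).comp a ((hHder a).const_mul θ)
    have h3 := h1.mul h2
    have : -(θ * (pY a * pZ a)) * Real.exp (θ * H a)
        + (1 - θ * G a) * (Real.exp (θ * H a) * (θ * pZ a)) = 0 := by
      have h4 : 1 - θ * G a = pY a := by
        have := hGeq a ha; linarith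
      rw [h4]; ring
    rw [this] at h3
    exact h3
  have hucont : Continuous u := by
    rw [hudef]
    have hGc : Continuous G := by
      rw [continuous_iff_continuousAt]; exact fun a => (hGder a).continuousAt
    have hHc : Continuous H := by
      rw [continuous_iff_continuousAt]; exact fun a => (hHder a).continuousAt
    exact (continuous_const.sub (continuous_const.mul hGc)).mul
      (Real.continuous_exp.comp (continuous_const.mul hHc))
  have huconst : u α = u 0 := by
    have := constant_of_has_deriv_right_zero (f := u) (a := 0) (b := α)
      (hucont.continuousOn)
      (fun x hx => ((huder x hx.1).hasDerivWithinAt))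
    exact this α (right_mem_Icc.mpr hα)
  have hu0 : u 0 = 1 := by
    simp [hudef, hGdef, hHdef, intervalIntegral.integral_same]
  have hpYα : pY α = Real.exp (-(θ * H α)) := by
    have h4 : 1 - θ * G α = pY α := by
      have := hGeq α hα; linarith
    have : pY α * Real.exp (θ * H α) = 1 := by
      rw [← h4]
      show u α = 1
      rw [huconst, hu0]
    rw [Real.exp_neg]
    field_simp at this ⊢
    linarith [this]
  -- conclude
  have hHα : H α = α * p + I := fubD
  have hfinal : pY α = ∫ ω, Real.exp (-(α * Y ω)) ∂P := by
    simp only [hpYdef, max_eq_left hα]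
  rw [← hfinal, hpYα, hHα]
  ring_nf
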